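/- 1024 · √3 · π = Σ_{k=0}^∞ (1 / (9^k · C(8k, 4k))) · (5717/(8k+1) - 413/(8k+3) - 45/(8k+5) + 5/(8k+7)), where the series converges absolutely. (The prefactor 1024 equals 2^{10}.) -/

import Mathlib

open Real intervalIntegral
open MeasureTheory


lemma betaI (p : ℕ) :
    ∫ x in (0:ℝ)..1, (x*(1-x))^p = (Nat.factorial p : ℝ)^2 / (Nat.factorial (2*p+1) : ℝ) := by
  induction p with
  | zero => simp
  | succ p ih =>
    have hcont : ∀ q : ℕ, IntervalIntegrable (fun x : ℝ => (x*(1-x))^q) MeasureTheory.volume 0 1 := by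
      intro q
      exact (Continuous.pow (by continuity) q).intervalIntegrable 0 1
    have key : ∫ x in (0:ℝ)..1,
        ((4*(p:ℝ)+6) * (x*(1-x))^(p+1) - ((p:ℝ)+1) * (x*(1-x))^p) = 0 := by
      have : ∀ x ∈ Set.uIcc (0:ℝ) 1, HasDerivAt (fun x : ℝ => (x*(1-x))^(p+1) * (2*x-1))
          ((4*(p:ℝ)+6) * (x*(1-x))^(p+1) - ((p:ℝ)+1) * (x*(1-x))^p) x := by
        intro x _
        have h1 : HasDerivAt (fun x : ℝ => x*(1-x)) (1-2*x) x := by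
          have := (hasDerivAt_id x).mul ((hasDerivAt_const x (1:ℝ)).sub (hasDerivAt_id x))
          refine this.congr_deriv ?_; simp only [id_eq, Pi.sub_apply]; ring
        have h2 := (h1.pow (p+1)).mul (((hasDerivAt_id x).const_mul 2).sub_const 1)
        refine h2.congr_deriv ?_
        have hps : (x*(1-x))^(p+1) = (x*(1-x))^p * (x*(1-x)) := pow_succ _ _
        simp only [Nat.add_sub_cancel, Nat.cast_add, Nat.cast_one, Pi.pow_apply]
        rw [hps]; simp only [id_eq]; ring
      have := integral_eq_sub_of_hasDerivAt this (by
        apply IntervalIntegrable.sub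
        · exact ((hcont (p+1)).const_mul _)
        · exact ((hcont p).const_mul _))
      simpa using this
    rw [integral_sub ((hcont (p+1)).const_mul _) ((hcont p).const_mul _),
        intervalIntegral.integral_const_mul, intervalIntegral.integral_const_mul, ih, sub_eq_zero] at key
    have h46 : (4*(p:ℝ)+6) ≠ 0 := by positivity
    have e1 : ∫ x in (0:ℝ)..1, (x*(1-x))^(p+1)
        = ((p:ℝ)+1) * ((Nat.factorial p : ℝ)^2 / (Nat.factorial (2*p+1) : ℝ)) / (4*(p:ℝ)+6) := by
      field_simp at key ⊢
      linarith [key]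
    rw [e1]
    have f1 : (Nat.factorial (p+1) : ℝ) = ((p:ℝ)+1) * (Nat.factorial p : ℝ) := by
      push_cast [Nat.factorial_succ]; ring
    have f2 : (Nat.factorial (2*(p+1)+1) : ℝ) = (2*(p:ℝ)+3) * ((2*(p:ℝ)+2)) * (Nat.factorial (2*p+1) : ℝ) := by
      have : 2*(p+1)+1 = (2*p+2)+1 := by ring
      rw [this]
      rw [Nat.factorial_succ, Nat.factorial_succ]
      push_cast; ring
    rw [f1, f2]
    have hf : (Nat.factorial (2*p+1) : ℝ) ≠ 0 := Nat.cast_ne_zero.mpr (Nat.factorial_ne_zero _)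
    field_simp
    ring



set_option maxHeartbeats 1000000 in
lemma termI (k : ℕ) :
    (1 / (9 ^ k * (Nat.choose (8 * k) (4 * k) : ℝ))) *
      (5717 / (8 * (k : ℝ) + 1) - 413 / (8 * (k : ℝ) + 3) -
        45 / (8 * (k : ℝ) + 5) + 5 / (8 * (k : ℝ) + 7))
    = ∫ x in (0:ℝ)..1, (((x*(1-x))^4/9)^k *
        (6144 - 3072*(x*(1-x)) - 2048*(x*(1-x))^2 + 1024*(x*(1-x))^3)) := by
  have hcont : ∀ q : ℕ, IntervalIntegrable (fun x : ℝ => (x*(1-x))^q) MeasureTheory.volume 0 1 :=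
    fun q => (Continuous.pow (by continuity) q).intervalIntegrable 0 1
  have expand : ∀ x : ℝ, ((x*(1-x))^4/9)^k *
        (6144 - 3072*(x*(1-x)) - 2048*(x*(1-x))^2 + 1024*(x*(1-x))^3)
      = (1/9:ℝ)^k * (6144*(x*(1-x))^(4*k) - 3072*(x*(1-x))^(4*k+1)
          - 2048*(x*(1-x))^(4*k+2) + 1024*(x*(1-x))^(4*k+3)) := by
    intro x
    rw [div_pow, ← pow_mul, pow_add, pow_add, pow_add, one_div, inv_pow]
    ring
  rw [intervalIntegral.integral_congr (g := fun x:ℝ => (1/9:ℝ)^k *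
        (6144*(x*(1-x))^(4*k) - 3072*(x*(1-x))^(4*k+1)
          - 2048*(x*(1-x))^(4*k+2) + 1024*(x*(1-x))^(4*k+3))) (fun x _ => expand x)]
  rw [intervalIntegral.integral_const_mul]
  have i1 := (hcont (4*k)).const_mul (6144:ℝ)
  have i2 := (hcont (4*k+1)).const_mul (3072:ℝ)
  have i3 := (hcont (4*k+2)).const_mul (2048:ℝ)
  have i4 := (hcont (4*k+3)).const_mul (1024:ℝ)
  rw [integral_add ((i1.sub i2).sub i3) i4, integral_sub (i1.sub i2) i3, integral_sub i1 i2,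
      intervalIntegral.integral_const_mul, intervalIntegral.integral_const_mul, intervalIntegral.integral_const_mul, intervalIntegral.integral_const_mul,
      betaI, betaI, betaI, betaI]
  have Fr : ∀ n : ℕ, (Nat.factorial (n+1) : ℝ) = ((n:ℝ)+1) * (Nat.factorial n : ℝ) := by
    intro n; push_cast [Nat.factorial_succ]; ring
  set K : ℝ := (k : ℝ) with hK
  set a : ℝ := (Nat.factorial (4*k) : ℝ) with haa
  set b : ℝ := (Nat.factorial (8*k) : ℝ) with hbb
  have ha0 : (0:ℝ) < a := by rw [haa]; exact_mod_cast Nat.factorial_pos _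
  have hb0 : (0:ℝ) < b := by rw [hbb]; exact_mod_cast Nat.factorial_pos _
  have G1 : (Nat.factorial (4*k+1) : ℝ) = (4*K+1)*a := by
    rw [Fr, haa, hK]; push_cast; ring
  have G2 : (Nat.factorial (4*k+2) : ℝ) = (4*K+2)*((4*K+1)*a) := by
    rw [show 4*k+2 = (4*k+1)+1 by ring, Fr, G1, hK]; push_cast; ring
  have G3 : (Nat.factorial (4*k+3) : ℝ) = (4*K+3)*((4*K+2)*((4*K+1)*a)) := by
    rw [show 4*k+3 = (4*k+2)+1 by ring, Fr, G2, hK]; push_cast; ring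
  have F1 : (Nat.factorial (8*k+1) : ℝ) = (8*K+1)*b := by
    rw [Fr, hbb, hK]; push_cast; ring
  have F3 : (Nat.factorial (8*k+3) : ℝ) = (8*K+3)*((8*K+2)*((8*K+1)*b)) := by
    rw [show 8*k+3 = (8*k+2)+1 by ring, Fr, show 8*k+2 = (8*k+1)+1 by ring, Fr, F1, hK]
    push_cast; ring
  have F5 : (Nat.factorial (8*k+5) : ℝ)
      = (8*K+5)*((8*K+4)*((8*K+3)*((8*K+2)*((8*K+1)*b)))) := by
    rw [show 8*k+5 = (8*k+4)+1 by ring, Fr, show 8*k+4 = (8*k+3)+1 by ring, Fr, F3, hK]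
    push_cast; ring
  have F7 : (Nat.factorial (8*k+7) : ℝ)
      = (8*K+7)*((8*K+6)*((8*K+5)*((8*K+4)*((8*K+3)*((8*K+2)*((8*K+1)*b)))))) := by
    rw [show 8*k+7 = (8*k+6)+1 by ring, Fr, show 8*k+6 = (8*k+5)+1 by ring, Fr, F5, hK]
    push_cast; ring
  have hchoose : (Nat.choose (8*k) (4*k) : ℝ) = b / (a*a) := by
    have h := Nat.choose_mul_factorial_mul_factorial (show 4*k ≤ 8*k by omega)
    rw [show 8*k - 4*k = 4*k by omega] at h
    have h2 : ((Nat.choose (8*k) (4*k) : ℝ)) * a * a = b := by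
      rw [haa, hbb]; exact_mod_cast congrArg (fun n : ℕ => (n : ℝ)) h
    field_simp [← h2]
    linear_combination h2
  rw [show 2*(4*k)+1 = 8*k+1 by ring, show 2*(4*k+1)+1 = 8*k+3 by ring,
      show 2*(4*k+2)+1 = 8*k+5 by ring, show 2*(4*k+3)+1 = 8*k+7 by ring,
      F1, F3, F5, F7, G1, G2, G3, hchoose]
  have hK0 : (0:ℝ) ≤ K := by rw [hK]; positivity
  have h9 : (9:ℝ)^k ≠ 0 := by positivity
  have d1 : (8*K+1) ≠ 0 := by positivity
  have d2 : (8*K+2) ≠ 0 := by positivity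
  have d3 : (8*K+3) ≠ 0 := by positivity
  have d4 : (8*K+4) ≠ 0 := by positivity
  have d5 : (8*K+5) ≠ 0 := by positivity
  have d6 : (8*K+6) ≠ 0 := by positivity
  have d7 : (8*K+7) ≠ 0 := by positivity
  have g1 : (4*K+1) ≠ 0 := by positivity
  have g2 : (4*K+2) ≠ 0 := by positivity
  have g3 : (4*K+3) ≠ 0 := by positivity
  rw [one_div_pow]
  field_simp
  ring

noncomputable def Fk (k : ℕ) (x : ℝ) : ℝ :=
  ((x*(1-x))^4/9)^k * (6144 - 3072*(x*(1-x)) - 2048*(x*(1-x))^2 + 1024*(x*(1-x))^3)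

lemma Fk_cont (k : ℕ) : Continuous (Fk k) := by
  unfold Fk; continuity

lemma Fk_bound (k : ℕ) {x : ℝ} (hx : x ∈ Set.Ioc (0:ℝ) 1) : ‖Fk k x‖ ≤ 12288 * (1/9)^k := by
  obtain ⟨hx0, hx1⟩ := hx
  set m : ℝ := x*(1-x) with hm
  have hm0 : 0 ≤ m := by rw [hm]; nlinarith
  have hm1 : m ≤ 1 := by rw [hm]; nlinarith
  have h1 : ((m^4/9))^k ≤ (1/9:ℝ)^k := by
    apply pow_le_pow_left₀ (by positivity)
    rw [div_le_div_iff₀ (by norm_num) (by norm_num)]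
    nlinarith [pow_le_one₀ hm0 hm1 (n := 4)]
  have h2 : |6144 - 3072*m - 2048*m^2 + 1024*m^3| ≤ 12288 := by
    rw [abs_le]; constructor <;> nlinarith
  rw [Real.norm_eq_abs, Fk, abs_mul, abs_pow]
  calc |m^4/9|^k * |6144 - 3072*m - 2048*m^2 + 1024*m^3|
      ≤ (1/9:ℝ)^k * 12288 := by
        apply mul_le_mul _ h2 (abs_nonneg _) (by positivity)
        rwa [abs_of_nonneg (by positivity)]
    _ = 12288 * (1/9)^k := by ring

lemma tsum_Fk {x : ℝ} (hx : x ∈ Set.Ioc (0:ℝ) 1) :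
    ∑' k : ℕ, Fk k x = 4608/(x^2+x+1) + 4608/(x^2-3*x+3) := by
  obtain ⟨hx0, hx1⟩ := hx
  set m : ℝ := x*(1-x) with hm
  have hm0 : 0 ≤ m := by rw [hm]; nlinarith
  have hm1 : m ≤ 1 := by rw [hm]; nlinarith
  have hr0 : 0 ≤ m^4/9 := by positivity
  have hr1 : m^4/9 < 1 := by
    rw [div_lt_one (by norm_num)]
    nlinarith [pow_le_one₀ hm0 hm1 (n := 4)]
  have := tsum_geometric_of_lt_one hr0 hr1
  unfold Fk
  rw [tsum_mul_right, this]
  have hq1 : x^2+x+1 > 0 := by positivity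
  have hq2 : x^2-3*x+3 > 0 := by nlinarith [sq_nonneg (x - 3/2)]
  have hden : (1 - m^4/9) ≠ 0 := by
    have : m^4/9 < 1 := hr1; linarith
  rw [inv_mul_eq_div, div_eq_iff hden]
  rw [div_add_div _ _ hq1.ne' hq2.ne', div_mul_eq_mul_div, eq_div_iff (mul_pos hq1 hq2).ne']
  rw [hm]
  ring

lemma q1_pos (x : ℝ) : 0 < x^2+x+1 := by nlinarith [sq_nonneg (2*x+1)]
lemma q2_pos (x : ℝ) : 0 < x^2-3*x+3 := by nlinarith [sq_nonneg (2*x-3)]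

lemma hasDerivG (x : ℝ) :
    HasDerivAt (fun y : ℝ => 3072*Real.sqrt 3*(arctan ((2*y+1)/Real.sqrt 3)
        + arctan ((2*y-3)/Real.sqrt 3)))
      (4608/(x^2+x+1) + 4608/(x^2-3*x+3)) x := by
  have hs0 : Real.sqrt 3 ≠ 0 := by positivity
  have hs2 : Real.sqrt 3 ^ 2 = 3 := Real.sq_sqrt (by norm_num)
  have h1 : HasDerivAt (fun y : ℝ => (2*y+1)/Real.sqrt 3) (2/Real.sqrt 3) x := by
    have := (((hasDerivAt_id x).const_mul (2:ℝ)).add_const (1:ℝ)).div_const (Real.sqrt 3)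
    simpa using this
  have h2 : HasDerivAt (fun y : ℝ => (2*y-3)/Real.sqrt 3) (2/Real.sqrt 3) x := by
    have := (((hasDerivAt_id x).const_mul (2:ℝ)).sub_const (3:ℝ)).div_const (Real.sqrt 3)
    simpa using this
  have h3 := ((h1.arctan).add (h2.arctan)).const_mul (3072*Real.sqrt 3)
  refine h3.congr_deriv ?_
  have e : ∀ u : ℝ, 1/(1+(u/Real.sqrt 3)^2) * (2/Real.sqrt 3)
      = 2*Real.sqrt 3/(3+u^2) := by
    intro u
    rw [div_pow, hs2]
    have h3u : (0:ℝ) < 3 + u^2 := by positivity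
    field_simp
    linear_combination (-1:ℝ) * hs2
  rw [e, e]
  have expand : Real.sqrt 3 * (2*Real.sqrt 3/(3+(2*x+1)^2) + 2*Real.sqrt 3/(3+(2*x-3)^2))
      = 2*Real.sqrt 3^2/(3+(2*x+1)^2) + 2*Real.sqrt 3^2/(3+(2*x-3)^2) := by ring
  rw [mul_assoc, expand, hs2]
  have hA : (0:ℝ) < 3+(2*x+1)^2 := by positivity
  have hB : (0:ℝ) < 3+(2*x-3)^2 := by positivity
  rw [div_add_div _ _ hA.ne' hB.ne', div_add_div _ _ (q1_pos x).ne' (q2_pos x).ne', mul_div_assoc', div_eq_div_iff (mul_pos hA hB).ne' (mul_pos (q1_pos x) (q2_pos x)).ne']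
  ring

lemma integral_rhs :
    ∫ x in (0:ℝ)..1, (4608/(x^2+x+1) + 4608/(x^2-3*x+3)) = 1024*Real.sqrt 3*π := by
  have hcont : Continuous (fun x : ℝ => 4608/(x^2+x+1) + 4608/(x^2-3*x+3)) := by
    apply Continuous.add
    · exact continuous_const.div (by continuity) (fun x => (q1_pos x).ne')
    · exact continuous_const.div (by continuity) (fun x => (q2_pos x).ne')
  rw [integral_eq_sub_of_hasDerivAt (fun x _ => hasDerivG x) (hcont.intervalIntegrable 0 1)]
  have hpi2 : (0:ℝ) < π := Real.pi_pos
  have ha3 : arctan (Real.sqrt 3) = π/3 := by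
    rw [← Real.tan_pi_div_three, Real.arctan_tan (by linarith) (by linarith)]
  have ha6 : arctan (1/Real.sqrt 3) = π/6 := by
    rw [← Real.tan_pi_div_six, Real.arctan_tan (by linarith) (by linarith)]
  have e1 : (2*(1:ℝ)+1)/Real.sqrt 3 = Real.sqrt 3 := by
    rw [show (2*(1:ℝ)+1) = 3 by norm_num]
    exact Real.div_sqrt
  have e2 : (2*(1:ℝ)-3)/Real.sqrt 3 = -(1/Real.sqrt 3) := by
    rw [show (2*(1:ℝ)-3) = -1 by norm_num, neg_div]
  have e3 : (2*(0:ℝ)+1)/Real.sqrt 3 = 1/Real.sqrt 3 := by norm_num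
  have e4 : (2*(0:ℝ)-3)/Real.sqrt 3 = -(Real.sqrt 3) := by
    rw [show (2*(0:ℝ)-3) = -3 by norm_num, neg_div]
    rw [show ((3:ℝ)/Real.sqrt 3) = Real.sqrt 3 from Real.div_sqrt]
  rw [e1, e2, e3, e4, Real.arctan_neg, Real.arctan_neg, ha3, ha6]
  ring


lemma sum_abs : Summable (fun k : ℕ =>
    |(1 / (9 ^ k * (Nat.choose (8 * k) (4 * k) : ℝ))) *
      (5717 / (8 * (k : ℝ) + 1) - 413 / (8 * (k : ℝ) + 3) -
        45 / (8 * (k : ℝ) + 5) + 5 / (8 * (k : ℝ) + 7))|) := by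
  apply Summable.of_nonneg_of_le (f := fun k : ℕ => 6180 * (1/9:ℝ)^k)
    (fun k => abs_nonneg _)
  · intro k
    have K0 : (0:ℝ) ≤ (k:ℝ) := Nat.cast_nonneg k
    have hC : (1:ℝ) ≤ (Nat.choose (8*k) (4*k) : ℝ) := by
      exact_mod_cast Nat.one_le_iff_ne_zero.mpr (Nat.choose_pos (by omega)).ne'
    rw [abs_mul]
    have h1 : |1/(9^k * (Nat.choose (8*k) (4*k) : ℝ))| ≤ (1/9:ℝ)^k := by
      rw [abs_of_nonneg (by positivity)]
      calc 1/(9^k * (Nat.choose (8*k) (4*k) : ℝ)) ≤ 1/(9:ℝ)^k := by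
            apply one_div_le_one_div_of_le (by positivity)
            exact le_mul_of_one_le_right (by positivity) hC
        _ = (1/9:ℝ)^k := by rw [one_div_pow]
    have h2 : |5717 / (8 * (k : ℝ) + 1) - 413 / (8 * (k : ℝ) + 3) -
        45 / (8 * (k : ℝ) + 5) + 5 / (8 * (k : ℝ) + 7)| ≤ 6180 := by
      have b1 : (0:ℝ) ≤ 5717/(8*(k:ℝ)+1) := by positivity
      have b2 : (0:ℝ) ≤ 413/(8*(k:ℝ)+3) := by positivity
      have b3 : (0:ℝ) ≤ 45/(8*(k:ℝ)+5) := by positivity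
      have b4 : (0:ℝ) ≤ 5/(8*(k:ℝ)+7) := by positivity
      have c1 : 5717/(8*(k:ℝ)+1) ≤ 5717 := by
        apply div_le_self (by norm_num); linarith
      have c2 : 413/(8*(k:ℝ)+3) ≤ 413 := by
        apply div_le_self (by norm_num); linarith
      have c3 : 45/(8*(k:ℝ)+5) ≤ 45 := by
        apply div_le_self (by norm_num); linarith
      have c4 : 5/(8*(k:ℝ)+7) ≤ 5 := by
        apply div_le_self (by norm_num); linarith
      rw [abs_le]
      constructor <;> linarith
    calc |1/(9^k * (Nat.choose (8*k) (4*k) : ℝ))| *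
          |5717 / (8 * (k : ℝ) + 1) - 413 / (8 * (k : ℝ) + 3) -
            45 / (8 * (k : ℝ) + 5) + 5 / (8 * (k : ℝ) + 7)|
        ≤ (1/9:ℝ)^k * 6180 := mul_le_mul h1 h2 (abs_nonneg _) (by positivity)
      _ = 6180 * (1/9:ℝ)^k := by ring
  · exact (summable_geometric_of_lt_one (by norm_num) (by norm_num)).mul_left 6180

theorem stmt7 :
    Summable (fun k : ℕ =>
      |(1 / (9 ^ k * (Nat.choose (8 * k) (4 * k) : ℝ))) *
        (5717 / (8 * (k : ℝ) + 1) - 413 / (8 * (k : ℝ) + 3) -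
          45 / (8 * (k : ℝ) + 5) + 5 / (8 * (k : ℝ) + 7))|) ∧
    1024 * Real.sqrt 3 * π =
      ∑' k : ℕ,
        (1 / (9 ^ k * (Nat.choose (8 * k) (4 * k) : ℝ))) *
          (5717 / (8 * (k : ℝ) + 1) - 413 / (8 * (k : ℝ) + 3) -
            45 / (8 * (k : ℝ) + 5) + 5 / (8 * (k : ℝ) + 7)) := by
  refine ⟨sum_abs, ?_⟩
  set μ : Measure ℝ := volume.restrict (Set.Ioc (0:ℝ) 1) with hμ
  have hterm : ∀ k : ℕ, (1 / (9 ^ k * (Nat.choose (8 * k) (4 * k) : ℝ))) *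
      (5717 / (8 * (k : ℝ) + 1) - 413 / (8 * (k : ℝ) + 3) -
        45 / (8 * (k : ℝ) + 5) + 5 / (8 * (k : ℝ) + 7)) = ∫ x, Fk k x ∂μ := by
    intro k
    rw [termI k, intervalIntegral.integral_of_le zero_le_one]
    rfl
  have hInt : ∀ k : ℕ, Integrable (Fk k) μ := fun k => (Fk_cont k).integrableOn_Ioc
  have hNorm : Summable (fun k : ℕ => ∫ x, ‖Fk k x‖ ∂μ) := by
    apply Summable.of_nonneg_of_le (f := fun k : ℕ => 12288 * (1/9:ℝ)^k)
      (fun k => integral_nonneg (fun x => norm_nonneg _))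
    · intro k
      have step : ∫ x, ‖Fk k x‖ ∂μ ≤ ∫ x, (12288 * (1/9:ℝ)^k) ∂μ := by
        rw [hμ]
        apply setIntegral_mono_on ((Fk_cont k).norm.integrableOn_Ioc)
          (integrableOn_const measure_Ioc_lt_top.ne) measurableSet_Ioc
        exact fun x hx => Fk_bound k hx
      calc ∫ x, ‖Fk k x‖ ∂μ ≤ ∫ x, (12288 * (1/9:ℝ)^k) ∂μ := step
        _ = 12288 * (1/9:ℝ)^k := by
            rw [hμ, setIntegral_const, Real.volume_real_Ioc]
            norm_num
    · exact (summable_geometric_of_lt_one (by norm_num) (by norm_num)).mul_left 12288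
  have hsum := MeasureTheory.hasSum_integral_of_summable_integral_norm hInt hNorm
  have h1 : ∑' k : ℕ, ∫ x, Fk k x ∂μ = ∫ x, (∑' k : ℕ, Fk k x) ∂μ := hsum.tsum_eq
  have h2 : ∫ x, (∑' k : ℕ, Fk k x) ∂μ
      = ∫ x, (4608/(x^2+x+1) + 4608/(x^2-3*x+3)) ∂μ := by
    apply MeasureTheory.integral_congr_ae
    rw [hμ]
    filter_upwards [ae_restrict_mem measurableSet_Ioc] with x hx
    exact tsum_Fk hx
  have h3 : ∫ x, (4608/(x^2+x+1) + 4608/(x^2-3*x+3)) ∂μ = 1024*Real.sqrt 3*π := by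
    rw [← integral_rhs, intervalIntegral.integral_of_le zero_le_one]
  calc 1024 * Real.sqrt 3 * π = ∫ x, (∑' k : ℕ, Fk k x) ∂μ := by rw [h2, h3]
    _ = ∑' k : ℕ, ∫ x, Fk k x ∂μ := h1.symm
    _ = _ := by
        apply tsum_congr
        intro k
        rw [← hterm k]
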